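/- Let H be a Hilbert space, A : dom(A) ⊆ H → H densely defined and closed, and S ∈ L(H) with S[dom(A)] ⊆ dom(A) and [S,A] := SA − AS continuous on dom(A). Then S* leaves dom(A*) invariant and cl([A*, S*]) = cl([S,A])*. -/

import Mathlib

open Filter Topology

noncomputable section

lemma dense_adjoint_domain' {H : Type*} [NormedAddCommGroup H] [InnerProductSpace ℝ H]
    [CompleteSpace H] (A : H →ₗ.[ℝ] H) (hAclosed : A.IsClosed) :
    Dense (A.adjoint.domain : Set H) := by
  rw [Submodule.dense_iff_topologicalClosure_eq_top, Submodule.topologicalClosure_eq_top_iff]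
  rw [Submodule.eq_bot_iff]
  intro y hy
  rw [Submodule.mem_orthogonal] at hy
  set e := WithLp.prodContinuousLinearEquiv 2 ℝ H H with he
  set G : Submodule ℝ (WithLp 2 (H × H)) :=
    A.graph.comap (e.toLinearEquiv : WithLp 2 (H × H) →ₗ[ℝ] H × H) with hGdef
  have hGmem : ∀ x : WithLp 2 (H × H), x ∈ G ↔ e x ∈ A.graph := fun x => Iff.rfl
  have hGclosed : IsClosed (G : Set (WithLp 2 (H × H))) := by
    have : (G : Set (WithLp 2 (H × H))) = e ⁻¹' (A.graph : Set (H × H)) := rfl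
    rw [this]
    exact hAclosed.preimage e.continuous
  haveI : CompleteSpace G := hGclosed.completeSpace_coe
  obtain ⟨g, hg, z, hz, hsum⟩ := G.exists_add_mem_mem_orthogonal (e.symm (0, y))
  -- z.snd (as H×H component) is in the adjoint domain
  have hz2 : (e z).2 ∈ A.adjoint.domain := by
    apply LinearPMap.mem_adjoint_domain_of_exists
    refine ⟨-(e z).1, fun x => ?_⟩
    have hx : (e.symm ((x : H), A x)) ∈ G := by
      rw [hGmem]
      simp only [ContinuousLinearEquiv.apply_symm_apply]
      exact A.mem_graph x
    have := (Submodule.mem_orthogonal G z).mp hz _ hx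
    rw [WithLp.prod_inner_apply] at this
    have h1 : (e.symm ((x : H), A x)).ofLp.1 = (x : H) := rfl
    have h2 : (e.symm ((x : H), A x)).ofLp.2 = A x := rfl
    rw [h1, h2] at this
    have hz1 : z.ofLp.1 = (e z).1 := rfl
    have hz2' : z.ofLp.2 = (e z).2 := rfl
    rw [hz1, hz2'] at this
    rw [inner_neg_left]
    have c1 : (inner ℝ ((e z).1) ((x : H)) : ℝ) = inner ℝ ((x : H)) ((e z).1) := real_inner_comm _ _
    have c2 : (inner ℝ ((e z).2) ((A x : H)) : ℝ) = inner ℝ ((A x : H)) ((e z).2) := real_inner_comm _ _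
    rw [c1, c2]
    linarith
  -- ⟪e.symm (0,y), z⟫ = 0
  have key : (inner ℝ (e.symm ((0 : H), y)) z : ℝ) = 0 := by
    rw [WithLp.prod_inner_apply]
    have h1 : (e.symm ((0:H), y)).ofLp.1 = (0 : H) := rfl
    have h2 : (e.symm ((0:H), y)).ofLp.2 = y := rfl
    rw [h1, h2, inner_zero_left]
    have := hy _ hz2
    have : (inner ℝ y ((e z).2) : ℝ) = 0 := by rw [real_inner_comm]; exact this
    have hz2'' : z.ofLp.2 = (e z).2 := rfl
    rw [hz2'', this, zero_add]
  have hgz : (inner ℝ g z : ℝ) = 0 := by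
    have := (Submodule.mem_orthogonal G z).mp hz g hg
    exact this
  have hzz : (inner ℝ z z : ℝ) = 0 := by
    have : (inner ℝ (g + z) z : ℝ) = 0 := by rw [← hsum]; exact key
    rw [inner_add_left, hgz, zero_add] at this
    exact this
  have hz0 : z = 0 := by
    exact inner_self_eq_zero.mp hzz
  rw [hz0, add_zero] at hsum
  rw [← hsum] at hg
  rw [hGmem] at hg
  simp only [ContinuousLinearEquiv.apply_symm_apply] at hg
  rw [LinearPMap.mem_graph_iff] at hg
  obtain ⟨x, hx1, hx2⟩ := hg
  have hx0 : x = 0 := Subtype.ext (by simpa using hx1)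
  rw [hx0] at hx2
  simpa using hx2.symm


/-- for `A` densely defined closed and `S` bounded leaving `dom A`
invariant with continuous commutator `[S,A]` (continuous extension `T`), the adjoint `S*`
leaves `dom A*` invariant and `cl([A*, S*]) = cl([S,A])*`, i.e. `T*` agrees on the (dense)
domain of `A*` with `A*S* - S*A*`. -/
theorem adjoint_commutator_S_A
    {H : Type*} [NormedAddCommGroup H] [InnerProductSpace ℝ H] [CompleteSpace H]
    (A : H →ₗ.[ℝ] H) (hAdense : Dense (A.domain : Set H)) (hAclosed : A.IsClosed)
    (S : H →L[ℝ] H) (hSA : ∀ x ∈ A.domain, S x ∈ A.domain)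
    (T : H →L[ℝ] H)
    (hT : ∀ x : A.domain, T (x : H) = S (A x) - A ⟨S (x : H), hSA x x.2⟩) :
    Dense (A.adjoint.domain : Set H) ∧
      ∀ v : A.adjoint.domain,
        ∃ h : ContinuousLinearMap.adjoint S (v : H) ∈ A.adjoint.domain,
          ContinuousLinearMap.adjoint T (v : H) =
            A.adjoint ⟨ContinuousLinearMap.adjoint S (v : H), h⟩ -
              ContinuousLinearMap.adjoint S (A.adjoint v) := by
  refine ⟨dense_adjoint_domain' A hAclosed, fun v => ?_⟩
  set w : H := ContinuousLinearMap.adjoint T (v : H) +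
    ContinuousLinearMap.adjoint S (A.adjoint v) with hw
  have hfa := LinearPMap.adjoint_isFormalAdjoint hAdense (T := A)
  have key : ∀ x : A.domain, (inner ℝ w (x : H) : ℝ) =
      inner ℝ (ContinuousLinearMap.adjoint S (v : H)) (A x) := by
    intro x
    rw [hw, inner_add_left, ContinuousLinearMap.adjoint_inner_left,
      ContinuousLinearMap.adjoint_inner_left, ContinuousLinearMap.adjoint_inner_left]
    have h1 : (inner ℝ (A.adjoint v : H) (S (x : H)) : ℝ) =
        inner ℝ (v : H) (A ⟨S (x : H), hSA x x.2⟩) := hfa v ⟨S (x : H), hSA x x.2⟩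
    rw [h1, hT x, ← inner_add_right]
    congr 1
    abel
  have h : ContinuousLinearMap.adjoint S (v : H) ∈ A.adjoint.domain :=
    A.mem_adjoint_domain_of_exists _ ⟨w, key⟩
  refine ⟨h, ?_⟩
  have hval : A.adjoint ⟨ContinuousLinearMap.adjoint S (v : H), h⟩ = w :=
    LinearPMap.adjoint_apply_eq hAdense _ key
  rw [hval, hw]
  abel
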